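/- The operation (Q, A) ⋉ (R, B) := (Q + A × R, A × B) on pairs of sets extends to a monoidal structure on Set × Set with unit (∅, {*}): there are natural associator and unitor isomorphisms satisfying the pentagon and triangle coherence conditions. -/

import Mathlib

open CategoryTheory

universe u

namespace SemidirectAux

abbrev C := Type u × Type u

def tObj (X Y : C) : C := (X.1 ⊕ (X.2 × Y.1), X.2 × Y.2)

def tHom {X₁ Y₁ X₂ Y₂ : C} (f : X₁ ⟶ Y₁) (g : X₂ ⟶ Y₂) : tObj X₁ X₂ ⟶ tObj Y₁ Y₂ :=
  (TypeCat.ofHom (Sum.map f.1 (Prod.map f.2 g.1)), TypeCat.ofHom (Prod.map f.2 g.2))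

def assoc (X Y Z : C) : tObj (tObj X Y) Z ≅ tObj X (tObj Y Z) where
  hom := (TypeCat.ofHom (fun s => match s with
    | Sum.inl (Sum.inl q) => Sum.inl q
    | Sum.inl (Sum.inr (a, r)) => Sum.inr (a, Sum.inl r)
    | Sum.inr ((a, b), s) => Sum.inr (a, Sum.inr (b, s))),
    TypeCat.ofHom fun x => (x.1.1, (x.1.2, x.2)))
  inv := (TypeCat.ofHom (fun s => match s with
    | Sum.inl q => Sum.inl (Sum.inl q)
    | Sum.inr (a, Sum.inl r) => Sum.inl (Sum.inr (a, r))
    | Sum.inr (a, Sum.inr (b, s)) => Sum.inr ((a, b), s)),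
    TypeCat.ofHom fun x => ((x.1, x.2.1), x.2.2))
  hom_inv_id := by
    refine Prod.ext ?_ ?_ <;> refine ConcreteCategory.hom_ext _ _ fun x => ?_
    · rcases x with ((q | ⟨a, r⟩) | ⟨⟨a, b⟩, s⟩) <;> rfl
    · rfl
  inv_hom_id := by
    refine Prod.ext ?_ ?_ <;> refine ConcreteCategory.hom_ext _ _ fun x => ?_
    · rcases x with (q | ⟨a, (r | ⟨b, s⟩)⟩) <;> rfl
    · rfl

def lUnit (X : C) : tObj (PEmpty, PUnit) X ≅ X where
  hom := (TypeCat.ofHom (fun s => match s with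
    | Sum.inr (_, r) => r), TypeCat.ofHom fun x => x.2)
  inv := (TypeCat.ofHom (fun r => Sum.inr (PUnit.unit, r)), TypeCat.ofHom fun x => (PUnit.unit, x))
  hom_inv_id := by
    refine Prod.ext ?_ ?_ <;> refine ConcreteCategory.hom_ext _ _ fun x => ?_
    · rcases x with (e | ⟨a, r⟩)
      · exact e.elim
      · rfl
    · rfl
  inv_hom_id := by refine Prod.ext ?_ ?_ <;> refine ConcreteCategory.hom_ext _ _ fun x => ?_ <;> rfl

def rUnit (X : C) : tObj X (PEmpty, PUnit) ≅ X where
  hom := (TypeCat.ofHom (fun s => match s with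
    | Sum.inl q => q), TypeCat.ofHom fun x => x.1)
  inv := (TypeCat.ofHom (fun q => Sum.inl q), TypeCat.ofHom fun x => (x, PUnit.unit))
  hom_inv_id := by
    refine Prod.ext ?_ ?_ <;> refine ConcreteCategory.hom_ext _ _ fun x => ?_
    · rcases x with (q | ⟨a, e⟩)
      · rfl
      · exact e.elim
    · rfl
  inv_hom_id := by refine Prod.ext ?_ ?_ <;> refine ConcreteCategory.hom_ext _ _ fun x => ?_ <;> rfl

instance struct : MonoidalCategoryStruct C where
  tensorObj := tObj
  tensorHom := tHom
  whiskerLeft X _ _ f := tHom (𝟙 X) f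
  whiskerRight f Y := tHom f (𝟙 Y)
  tensorUnit := (PEmpty, PUnit)
  associator := assoc
  leftUnitor := lUnit
  rightUnitor := rUnit

def monoidal : MonoidalCategory C :=
  MonoidalCategory.ofTensorHom
    (id_tensorHom_id := by
      intros
      refine Prod.ext ?_ ?_ <;> refine ConcreteCategory.hom_ext _ _ fun x => ?_
      · rcases x with (q | ⟨a, r⟩) <;> rfl
      · rfl)
    (id_tensorHom := by intros; rfl)
    (tensorHom_id := by intros; rfl)
    (tensorHom_comp_tensorHom := by
      intros
      refine Prod.ext ?_ ?_ <;> refine ConcreteCategory.hom_ext _ _ fun x => ?_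
      · rcases x with (q | ⟨a, r⟩) <;> rfl
      · rfl)
    (associator_naturality := by
      intro X₁ X₂ X₃ Y₁ Y₂ Y₃ f₁ f₂ f₃
      refine Prod.ext ?_ ?_ <;> refine ConcreteCategory.hom_ext _ _ fun x => ?_
      · rcases x with ((q | ⟨a, r⟩) | ⟨⟨a, b⟩, s⟩) <;> rfl
      · rfl)
    (leftUnitor_naturality := by
      intro X Y f
      refine Prod.ext ?_ ?_ <;> refine ConcreteCategory.hom_ext _ _ fun x => ?_
      · rcases x with (e | ⟨a, r⟩)
        · exact e.elim
        · rfl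
      · rfl)
    (rightUnitor_naturality := by
      intro X Y f
      refine Prod.ext ?_ ?_ <;> refine ConcreteCategory.hom_ext _ _ fun x => ?_
      · rcases x with (q | ⟨a, e⟩)
        · rfl
        · exact e.elim
      · rfl)
    (pentagon := by
      intro W X Y Z
      refine Prod.ext ?_ ?_ <;> refine ConcreteCategory.hom_ext _ _ fun x => ?_
      · rcases x with (((q | ⟨a, r⟩) | ⟨⟨a, b⟩, s⟩) | ⟨⟨⟨a, b⟩, c⟩, t⟩) <;> rfl
      · rfl)
    (triangle := by
      intro X Y
      refine Prod.ext ?_ ?_ <;> refine ConcreteCategory.hom_ext _ _ fun x => ?_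
      · rcases x with ((q | ⟨a, e⟩) | ⟨⟨a, b⟩, s⟩)
        · rfl
        · exact e.elim
        · rfl
      · rfl)

end SemidirectAux

/-- the operation `(Q, A) ⋉ (R, B) := (Q ⊕ A × R, A × B)` extends to a
monoidal structure on `Set × Set` with unit `(∅, {*})`: there is a monoidal category
structure (with associators and unitors satisfying the pentagon and triangle
coherences) whose tensor product on objects is `⋉` and whose unit is `(∅, {*})`. -/
theorem semidirect_monoidal_structure :
    ∃ M : MonoidalCategory (Type u × Type u),
      (∀ X Y : Type u × Type u,
        M.tensorObj X Y = (X.1 ⊕ (X.2 × Y.1), X.2 × Y.2)) ∧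
      M.tensorUnit = (PEmpty, PUnit) := by
  exact ⟨SemidirectAux.monoidal.{u}, fun X Y => rfl, rfl⟩
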